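/- Let n ≥ 2 and let P be the n × n real matrix with P_{r,r+1} = P_{r+1,r} = 1/(2(n−1)) for 1 ≤ r ≤ n−1, P_{r,s} = 0 for all other s ≠ r, and P_{r,r} = 1 − Σ_{s≠r} P_{r,s}. Then the eigenvalues of P are exactly (n − 2 + cos(kπ/n))/(n − 1) for k = 0, 1, …, n−1; in particular the second-largest eigenvalue of P is 1 − (1 − cos(π/n))/(n − 1), so the spectral gap of P equals (1 − cos(π/n))/(n − 1). -/

import Mathlib

open Finset

/-- Off-diagonal entries of the slowed-down random walk on the path `{1, ..., n}`:
from `r` it moves to each neighbour with probability `1/(2(n-1))`. -/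
noncomputable def Poff (n : ℕ) (r s : Fin n) : ℝ :=
  if (s : ℕ) = (r : ℕ) + 1 ∨ (r : ℕ) = (s : ℕ) + 1 then 1 / (2 * ((n : ℝ) - 1)) else 0

/-- The transition matrix `P` of the slowed-down random walk on the path `{1, ..., n}`. -/
noncomputable def Pmat (n : ℕ) : Matrix (Fin n) (Fin n) ℝ :=
  Matrix.of fun r s =>
    if r = s then 1 - ∑ t ∈ Finset.univ.erase r, Poff n r t
    else Poff n r s

open Polynomial Real Matrix

lemma charpoly_eval' {n : ℕ} (M : Matrix (Fin n) (Fin n) ℝ) (μ : ℝ) :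
    M.charpoly.eval μ = (μ • (1 : Matrix (Fin n) (Fin n) ℝ) - M).det := by
  rw [Matrix.charpoly, ← Polynomial.coe_evalRingHom, RingHom.map_det]
  congr 1
  ext i j
  by_cases h : i = j <;>
    simp [Matrix.charmatrix_apply, Matrix.map_apply, h, Matrix.one_apply, Matrix.diagonal_apply,
      Matrix.smul_apply, Matrix.sub_apply]

lemma sum_ind {n : ℕ} (m : ℕ) (V : ℕ → ℝ) (c : ℝ) :
    ∑ s : Fin n, (if (s : ℕ) = m then c else 0) * V (s : ℕ) =
      if m < n then c * V m else 0 := by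
  by_cases h : m < n
  · rw [if_pos h, Finset.sum_eq_single (⟨m, h⟩ : Fin n)]
    · simp
    · intro b _ hb
      rw [if_neg, zero_mul]
      simpa [Fin.ext_iff] using hb
    · simp
  · rw [if_neg h]
    apply Finset.sum_eq_zero
    intro s _
    rw [if_neg, zero_mul]
    omega

lemma Poff_mul_sum {n : ℕ} (r : Fin n) (V : ℕ → ℝ) :
    ∑ s : Fin n, Poff n r s * V (s : ℕ) =
      (if (r : ℕ) + 1 < n then (1 / (2 * ((n : ℝ) - 1))) * V ((r : ℕ) + 1) else 0) +
      (if 1 ≤ (r : ℕ) then (1 / (2 * ((n : ℝ) - 1))) * V ((r : ℕ) - 1) else 0) := by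
  set c : ℝ := 1 / (2 * ((n : ℝ) - 1)) with hc
  have hsplit : ∀ s : Fin n, Poff n r s =
      (if (s : ℕ) = (r : ℕ) + 1 then c else 0) + (if (s : ℕ) = (r : ℕ) - 1 ∧ 1 ≤ (r : ℕ) then c else 0) := by
    intro s
    unfold Poff
    by_cases h : (s : ℕ) = (r : ℕ) + 1
    · rw [if_pos (Or.inl h), if_pos h, if_neg (by omega), add_zero]
    · by_cases h2 : (r : ℕ) = (s : ℕ) + 1
      · rw [if_pos (Or.inr h2), if_neg h, if_pos (by omega), zero_add]
      · rw [if_neg (by tauto), if_neg h, if_neg (by omega), add_zero]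
  simp_rw [hsplit, add_mul, Finset.sum_add_distrib]
  congr 1
  · rw [sum_ind]
  · by_cases hr : 1 ≤ (r : ℕ)
    · rw [if_pos hr]
      simp_rw [if_congr (and_iff_left hr) rfl rfl]
      rw [sum_ind, if_pos (by omega)]
    · rw [if_neg hr]
      apply Finset.sum_eq_zero
      intro s _
      rw [if_neg (by tauto), zero_mul]

lemma Poff_self {n : ℕ} (r : Fin n) : Poff n r r = 0 := by
  rw [Poff, if_neg (by omega)]

lemma Pmat_mulVec {n : ℕ} (V : ℕ → ℝ) (r : Fin n) :
    (Pmat n *ᵥ (fun s => V (s : ℕ))) r =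
      V (r : ℕ)
      + (if (r : ℕ) + 1 < n then (1 / (2 * ((n : ℝ) - 1))) * (V ((r : ℕ) + 1) - V (r : ℕ)) else 0)
      + (if 1 ≤ (r : ℕ) then (1 / (2 * ((n : ℝ) - 1))) * (V ((r : ℕ) - 1) - V (r : ℕ)) else 0) := by
  set c : ℝ := 1 / (2 * ((n : ℝ) - 1)) with hc
  have h1 : ∑ s ∈ Finset.univ.erase r, Poff n r s * V (s : ℕ)
      = ∑ s : Fin n, Poff n r s * V (s : ℕ) := by
    rw [← Finset.sum_erase_add _ _ (Finset.mem_univ r), Poff_self, zero_mul, add_zero]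
  have h2 : ∑ t ∈ Finset.univ.erase r, Poff n r t = ∑ t : Fin n, Poff n r t := by
    rw [← Finset.sum_erase_add _ _ (Finset.mem_univ r), Poff_self, add_zero]
  have h3 : ∑ t : Fin n, Poff n r t = ∑ t : Fin n, Poff n r t * (fun _ : ℕ => (1 : ℝ)) (t : ℕ) := by
    simp
  calc (Pmat n *ᵥ (fun s => V (s : ℕ))) r
      = ∑ s : Fin n, Pmat n r s * V (s : ℕ) := rfl
    _ = ∑ s ∈ Finset.univ.erase r, Pmat n r s * V (s : ℕ) + Pmat n r r * V (r : ℕ) :=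
        (Finset.sum_erase_add _ _ (Finset.mem_univ r)).symm
    _ = ∑ s ∈ Finset.univ.erase r, Poff n r s * V (s : ℕ)
        + (1 - ∑ t ∈ Finset.univ.erase r, Poff n r t) * V (r : ℕ) := by
        congr 1
        · exact Finset.sum_congr rfl fun s hs => by
            rw [Pmat, Matrix.of_apply, if_neg (Finset.ne_of_mem_erase hs).symm]
        · rw [Pmat, Matrix.of_apply, if_pos rfl]
    _ = V (r : ℕ)
        + (if (r : ℕ) + 1 < n then c * (V ((r : ℕ) + 1) - V (r : ℕ)) else 0)
        + (if 1 ≤ (r : ℕ) then c * (V ((r : ℕ) - 1) - V (r : ℕ)) else 0) := by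
        rw [h1, h2, h3, Poff_mul_sum r V, Poff_mul_sum r (fun _ => (1 : ℝ))]
        by_cases hu : (r : ℕ) + 1 < n <;> by_cases hl : 1 ≤ (r : ℕ) <;>
          simp only [hu, hl, if_true, if_false, if_pos, if_neg, not_false_iff] <;> ring

/-- The eigenvector entries: `Vf n k m = cos((2m+1)kπ/(2n))`. -/
noncomputable def Vf (n k : ℕ) (m : ℕ) : ℝ :=
  Real.cos ((2 * (m : ℝ) + 1) * ((k : ℝ) * Real.pi / (2 * (n : ℝ))))

lemma cos_key (x y : ℝ) : Real.cos (x - y) + Real.cos (x + y) = 2 * Real.cos y * Real.cos x := by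
  rw [Real.cos_sub, Real.cos_add]; ring

lemma two_a {n k : ℕ} (hn : (n : ℝ) ≠ 0) :
    2 * ((k : ℝ) * Real.pi / (2 * (n : ℝ))) = (k : ℝ) * Real.pi / (n : ℝ) := by
  field_simp

lemma rec_mid {n k : ℕ} (hn : (n : ℝ) ≠ 0) {m : ℕ} (hm : 1 ≤ m) :
    Vf n k (m - 1) + Vf n k (m + 1) =
      2 * Real.cos ((k : ℝ) * Real.pi / (n : ℝ)) * Vf n k m := by
  set a : ℝ := (k : ℝ) * Real.pi / (2 * (n : ℝ)) with ha
  have hcast : ((m - 1 : ℕ) : ℝ) = (m : ℝ) - 1 := by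
    push_cast [hm]; ring
  rw [Vf, Vf, Vf, hcast, ← two_a (k := k) hn, ← ha,
    show (2 * ((m : ℝ) - 1) + 1) * a = (2 * (m : ℝ) + 1) * a - 2 * a by ring,
    show (2 * ((m + 1 : ℕ) : ℝ) + 1) * a = (2 * (m : ℝ) + 1) * a + 2 * a by push_cast; ring,
    cos_key]

lemma rec_left {n k : ℕ} (hn : (n : ℝ) ≠ 0) :
    Vf n k 0 + Vf n k 1 = 2 * Real.cos ((k : ℝ) * Real.pi / (n : ℝ)) * Vf n k 0 := by
  set a : ℝ := (k : ℝ) * Real.pi / (2 * (n : ℝ)) with ha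
  have h := cos_key a (2 * a)
  rw [show a - 2 * a = -a by ring, Real.cos_neg] at h
  rw [Vf, Vf, ← two_a (k := k) hn, ← ha,
    show (2 * ((0 : ℕ) : ℝ) + 1) * a = a by push_cast; ring,
    show (2 * ((1 : ℕ) : ℝ) + 1) * a = a + 2 * a by push_cast; ring]
  exact h

lemma rec_right {n k : ℕ} (hn : 2 ≤ n) :
    Vf n k (n - 2) + Vf n k (n - 1) =
      2 * Real.cos ((k : ℝ) * Real.pi / (n : ℝ)) * Vf n k (n - 1) := by
  have hn0 : (n : ℝ) ≠ 0 := by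
    simp only [ne_eq, Nat.cast_eq_zero]; omega
  set a : ℝ := (k : ℝ) * Real.pi / (2 * (n : ℝ)) with ha
  set x : ℝ := (2 * ((n : ℝ) - 1) + 1) * a with hx
  have h := cos_key x (2 * a)
  have e1 : x + 2 * a = (k : ℝ) * Real.pi + a := by
    rw [hx, ha]; field_simp; ring
  have e2 : x = (k : ℝ) * Real.pi - a := by
    rw [hx, ha]; field_simp; ring
  have hrefl : Real.cos (x + 2 * a) = Real.cos x := by
    rw [e1, e2, Real.cos_add, Real.cos_sub, Real.sin_nat_mul_pi]
    ring
  rw [hrefl] at h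
  rw [Vf, Vf, ← two_a (k := k) hn0, ← ha, Nat.cast_sub hn, Nat.cast_sub (by omega : 1 ≤ n)]
  push_cast
  rw [show (2 * ((n : ℝ) - 2) + 1) * a = x - 2 * a by rw [hx]; ring,
    show (2 * ((n : ℝ) - 1) + 1) * a = x from hx.symm]
  exact h

lemma alg1 (n V Vp Vm co : ℝ) (hn1 : n - 1 ≠ 0) (h : Vm + Vp = 2 * co * V) :
    V + 1 / (2 * (n - 1)) * (Vp - V) + 1 / (2 * (n - 1)) * (Vm - V) = (n - 2 + co) / (n - 1) * V := by
  field_simp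
  linear_combination h

lemma alg2 (n V Vp co : ℝ) (hn1 : n - 1 ≠ 0) (h : Vp + V = 2 * co * V) :
    V + 1 / (2 * (n - 1)) * (Vp - V) = (n - 2 + co) / (n - 1) * V := by
  field_simp
  linear_combination h

lemma eigen {n : ℕ} (hn : 2 ≤ n) (k : ℕ) :
    Pmat n *ᵥ (fun s : Fin n => Vf n k (s : ℕ)) =
      (((n : ℝ) - 2 + Real.cos ((k : ℝ) * Real.pi / (n : ℝ))) / ((n : ℝ) - 1)) •
        (fun s : Fin n => Vf n k (s : ℕ)) := by
  have hn0 : (n : ℝ) ≠ 0 := by simp only [ne_eq, Nat.cast_eq_zero]; omega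
  have hge : (2 : ℝ) ≤ (n : ℝ) := by exact_mod_cast hn
  have hn1 : (n : ℝ) - 1 ≠ 0 := by linarith
  funext r
  rw [Pmat_mulVec (Vf n k) r]
  simp only [Pi.smul_apply, smul_eq_mul]
  by_cases hl : 1 ≤ (r : ℕ)
  · by_cases hu : (r : ℕ) + 1 < n
    · rw [if_pos hu, if_pos hl]
      exact alg1 _ _ _ _ _ hn1 (rec_mid hn0 hl)
    · have hr2 : (r : ℕ) - 1 = n - 2 := by omega
      have hr : (r : ℕ) = n - 1 := by omega
      rw [if_neg hu, if_pos hl, add_zero, hr2, hr]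
      exact alg2 _ _ _ _ hn1 (rec_right hn)
  · have hr : (r : ℕ) = 0 := by omega
    have hu : (r : ℕ) + 1 < n := by omega
    rw [if_pos hu, if_neg hl, add_zero, hr]
    exact alg2 _ _ _ _ hn1 (by linarith [rec_left (n := n) (k := k) hn0])

lemma isRoot_lam {n : ℕ} (hn : 2 ≤ n) {k : ℕ} (hk : k < n) :
    (Pmat n).charpoly.IsRoot
      (((n : ℝ) - 2 + Real.cos ((k : ℝ) * Real.pi / (n : ℝ))) / ((n : ℝ) - 1)) := by
  have hn0 : (0 : ℝ) < n := by
    have : 0 < n := by omega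
    exact_mod_cast this
  rw [Polynomial.IsRoot, charpoly_eval']
  refine Matrix.exists_mulVec_eq_zero_iff.mp ⟨fun s => Vf n k (s : ℕ), ?_, ?_⟩
  · have hpos : 0 < Vf n k 0 := by
      have hx : (2 * ((0 : ℕ) : ℝ) + 1) * ((k : ℝ) * Real.pi / (2 * (n : ℝ)))
          = (k : ℝ) * Real.pi / (2 * (n : ℝ)) := by push_cast; ring
      rw [Vf, hx]
      have hkn : (k : ℝ) < (n : ℝ) := by exact_mod_cast hk
      have hpi := Real.pi_pos
      apply Real.cos_pos_of_mem_Ioo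
      constructor
      · have h0 : (0 : ℝ) ≤ (k : ℝ) * Real.pi / (2 * (n : ℝ)) := by positivity
        linarith
      · rw [div_lt_div_iff₀ (by positivity) two_pos]
        nlinarith [(Nat.cast_nonneg k : (0 : ℝ) ≤ k)]
    intro h0
    have := congrFun h0 (⟨0, by omega⟩ : Fin n)
    simp only [Pi.zero_apply] at this
    exact absurd this (ne_of_gt hpos)
  · rw [Matrix.sub_mulVec, Matrix.smul_mulVec, Matrix.one_mulVec, eigen hn k, sub_self]

/-- the eigenvalues of `P` are exactly `(n - 2 + cos(kπ/n))/(n-1)` for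
`k = 0, 1, ..., n-1`; in particular the second-largest eigenvalue of `P` is
`1 - (1 - cos(π/n))/(n-1)`, so the spectral gap of `P` is `(1 - cos(π/n))/(n-1)`. -/
theorem path_walk_eigenvalues (n : ℕ) (hn : 2 ≤ n) :
    (Pmat n).charpoly.roots =
      (Multiset.range n).map
        (fun k => ((n : ℝ) - 2 + Real.cos ((k : ℝ) * Real.pi / n)) / ((n : ℝ) - 1)) ∧
    ∀ l : List ℝ, l.Pairwise (· ≥ ·) → (l : Multiset ℝ) = (Pmat n).charpoly.roots →
      l[1]? = some (1 - (1 - Real.cos (Real.pi / n)) / ((n : ℝ) - 1)) := by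
  set f : ℕ → ℝ := fun k => ((n : ℝ) - 2 + Real.cos ((k : ℝ) * Real.pi / n)) / ((n : ℝ) - 1)
    with hf
  have hge : (2 : ℝ) ≤ (n : ℝ) := by exact_mod_cast hn
  have hn1 : (0 : ℝ) < (n : ℝ) - 1 := by linarith
  have hn0 : (0 : ℝ) < (n : ℝ) := by linarith
  have hanti : ∀ i j : ℕ, i < j → j < n → f j < f i := by
    intro i j hij hj
    have hij' : (i : ℝ) < (j : ℝ) := by exact_mod_cast hij
    have hj' : (j : ℝ) ≤ (n : ℝ) := by exact_mod_cast hj.le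
    have hpi := Real.pi_pos
    have hcos : Real.cos ((j : ℝ) * Real.pi / n) < Real.cos ((i : ℝ) * Real.pi / n) := by
      apply Real.strictAntiOn_cos
      · constructor
        · positivity
        · rw [div_le_iff₀ hn0]; nlinarith [(Nat.cast_nonneg i : (0:ℝ) ≤ i)]
      · constructor
        · positivity
        · rw [div_le_iff₀ hn0]; nlinarith [(Nat.cast_nonneg j : (0:ℝ) ≤ j)]
      · rw [div_lt_div_iff₀ hn0 hn0]; nlinarith [mul_pos hpi hn0]
    rw [hf]
    exact div_lt_div_of_pos_right (by linarith) hn1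
  set L : List ℝ := (List.range n).map f with hL
  have hpw : L.Pairwise (· > ·) := by
    rw [hL, List.pairwise_map, List.pairwise_iff_getElem]
    intro a b ha hb hab
    rw [List.length_range] at ha hb
    simp only [List.getElem_range]
    exact hanti a b hab hb
  have hsorted : L.Pairwise (· ≥ ·) := hpw.imp fun h => le_of_lt h
  have hnd : L.Nodup := hpw.imp fun h => ne_of_gt h
  have hmem : ∀ a ∈ L, a ∈ (Pmat n).charpoly.roots := by
    intro a ha
    rw [hL, List.mem_map] at ha
    obtain ⟨k, hk, rfl⟩ := ha
    rw [List.mem_range] at hk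
    exact Polynomial.mem_roots'.mpr ⟨(Pmat n).charpoly_monic.ne_zero, isRoot_lam hn hk⟩
  have hle : (L : Multiset ℝ) ≤ (Pmat n).charpoly.roots := by
    rw [Multiset.le_iff_subset (Multiset.coe_nodup.mpr hnd)]
    intro a ha
    exact hmem a (by exact_mod_cast ha)
  have hcard : Multiset.card (Pmat n).charpoly.roots ≤ n := by
    have := (Pmat n).charpoly.card_roots'
    rwa [Matrix.charpoly_natDegree_eq_dim, Fintype.card_fin] at this
  have hroots : (L : Multiset ℝ) = (Pmat n).charpoly.roots := by
    apply Multiset.eq_of_le_of_card_le hle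
    rw [Multiset.coe_card, hL, List.length_map, List.length_range]
    exact hcard
  constructor
  · rw [← hroots, hL, hf]
    simp [Multiset.range]
    exact List.Perm.refl _
  · intro l hsort hl
    haveI : IsAntisymm ℝ (· ≥ ·) := ⟨fun a b h1 h2 => le_antisymm h2 h1⟩
    have hperm : l.Perm L := Multiset.coe_eq_coe.mp (by rw [hl, ← hroots])
    have heq : l = L := List.Perm.eq_of_pairwise (fun a b _ _ h1 h2 => le_antisymm h2 h1) hsort hsorted hperm
    rw [heq, hL, List.getElem?_map, List.getElem?_range (by omega : 1 < n)]
    simp only [Option.map_some]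
    congr 1
    rw [hf]
    push_cast
    rw [one_mul]
    field_simp
    ring
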